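/- Assume the simultaneous Doeblin condition and fix α ∈ (0,1). Let x ∈ S satisfy J*(λ,x) = γ₀ := min_{y∈S} J*(λ,y), and suppose π ∈ 𝒫 is ε-optimal at x where ε ∈ (0, ξ). Then for each r ∈ ℕ, P_x^π[ J*(λ,X_r) = γ₀ ] = 1. -/

import Mathlib

open scoped Classical BigOperators ENNReal

namespace RiskSensitive

/-- A (history-dependent, randomized) policy for a finite MDP: given the past
(chronological list of (state, action) pairs) and the current state, it assigns a
probability weight to each action, concentrated on the admissible actions. -/
structure Policy (S A : Type*) [Fintype S] [Fintype A] (Adm : S → Finset A) where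
  toFun : List (S × A) → S → A → ℝ
  nonneg : ∀ h s a, 0 ≤ toFun h s a
  sum_one : ∀ h s, ∑ a, toFun h s a = 1
  supp : ∀ h s a, a ∉ Adm s → toFun h s a = 0

variable {S A : Type*} [Fintype S] [Fintype A]
variable (Adm : S → Finset A) (p : S → A → S → ℝ) (C : S → A → ℝ) (lam : ℝ)

/-- Probability of a finite trajectory (list of (action, next-state) pairs), given the
history so far and the current state. -/
noncomputable def pathProbAux (π : Policy S A Adm) :
    List (S × A) → S → List (A × S) → ℝ
  | _, _, [] => 1
  | hist, x, (a, y) :: rest =>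
      π.toFun hist x a * p x a y * pathProbAux π (hist ++ [(x, a)]) y rest

/-- `pathProb π x l` is `P_x^π[A_0 = a_0, X_1 = y_1, …]` for `l = [(a_0,y_1),…]`. -/
noncomputable def pathProb (π : Policy S A Adm) (x : S) (l : List (A × S)) : ℝ :=
  pathProbAux Adm p π [] x l

/-- Probability of a cylinder event depending on the first `n` (action, next-state) pairs. -/
noncomputable def cylProb (π : Policy S A Adm) (x : S) (n : ℕ)
    (E : (Fin n → A × S) → Prop) : ℝ :=
  ∑ v : Fin n → A × S, if E v then pathProb Adm p π x (List.ofFn v) else 0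

/-- The state `X_t` along the trajectory encoded by `l`, starting from `x`. -/
def stateAt (x : S) (l : List (A × S)) (t : ℕ) : S :=
  (l.take t).foldl (fun _ q => q.2) x

/-- The final state of the finite trajectory `l` started at `x`. -/
def lastState (x : S) (l : List (A × S)) : S :=
  l.foldl (fun _ q => q.2) x

/-- `Σ_t w(X_t, A_t)` along the finite trajectory `l` started at `x`. -/
def costSum (w : S → A → ℝ) : S → List (A × S) → ℝ
  | _, [] => 0
  | x, (a, y) :: rest => w x a + costSum w y rest

/-- `J_n(λ,π,x) = (1/λ) log E_x^π[exp(λ Σ_{t<n} C(X_t,A_t))]`. -/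
noncomputable def Jn (π : Policy S A Adm) (x : S) (n : ℕ) : ℝ :=
  (1 / lam) * Real.log (∑ v : Fin n → A × S,
    pathProb Adm p π x (List.ofFn v) * Real.exp (lam * costSum C x (List.ofFn v)))

/-- The risk-sensitive average cost `J(λ,π,x) = limsup_n J_n(λ,π,x)/n`. -/
noncomputable def Javg (π : Policy S A Adm) (x : S) : ℝ :=
  Filter.limsup (fun n : ℕ => Jn Adm p C lam π x n / n) Filter.atTop

/-- Optimal risk-sensitive average cost `J*(λ,x)`. -/
noncomputable def Jopt (x : S) : ℝ :=
  ⨅ π : Policy S A Adm, Javg Adm p C lam π x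

/-- `π` is `ε`-optimal at `x`. -/
def EpsOptimalAt (π : Policy S A Adm) (x : S) (ε : ℝ) : Prop :=
  Javg Adm p C lam π x ≤ Jopt Adm p C lam x + ε

/-- `FirstExit Q v` : the trajectory `v` leaves `{Q}` for the first time exactly at its
last step, i.e. the exit time of `Q` equals `n`. -/
def FirstExit (Q : S → Prop) {n : ℕ} (v : Fin n → A × S) : Prop :=
  0 < n ∧ (∀ t : Fin n, (t : ℕ) + 1 < n → Q (v t).2) ∧
    ∀ t : Fin n, (t : ℕ) + 1 = n → ¬ Q (v t).2

/-- `E_x^π[ exp(Σ_{t<τ} w(X_t,A_t)) ]` where `τ = min{n ≥ 1 : ¬ Q (X_n)}` is the first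
exit time from `Q` (the contribution of `[τ = ∞]` is null when `τ < ∞` a.s.). -/
noncomputable def EexitExp (π : Policy S A Adm) (x : S) (Q : S → Prop)
    (w : S → A → ℝ) : ℝ≥0∞ :=
  ∑' n : ℕ, ∑ v : Fin n → A × S,
    if FirstExit Q v then
      ENNReal.ofReal (pathProb Adm p π x (List.ofFn v) *
        Real.exp (costSum w x (List.ofFn v)))
    else 0

/-- `E_x^π[ exp(Σ_{t<T} w(X_t,A_t)) ]` with `T` the first positive arrival time to `z`. -/
noncomputable def EhitExp (π : Policy S A Adm) (x z : S) (w : S → A → ℝ) : ℝ≥0∞ :=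
  EexitExp Adm p π x (fun y => y ≠ z) w

/-- `E_x^π[T]`, the expected first positive arrival time to `z`, computed as
`Σ_{n≥0} P_x^π[T > n]`. -/
noncomputable def ExpT (π : Policy S A Adm) (x z : S) : ℝ≥0∞ :=
  ∑' n : ℕ, ENNReal.ofReal
    (cylProb Adm p π x n (fun v => ∀ t : Fin n, (v t).2 ≠ z))

/-- `P_x^π[T > n]`, the probability that `z` is not visited during the first `n` steps. -/
noncomputable def survProb (π : Policy S A Adm) (x z : S) (n : ℕ) : ℝ :=
  cylProb Adm p π x n (fun v => ∀ t : Fin n, (v t).2 ≠ z)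

/-- The stationary policy induced by a choice function `f ∈ 𝔽`. -/
noncomputable def stationary (f : S → A) (hf : ∀ s, f s ∈ Adm s) : Policy S A Adm where
  toFun := fun _ s a => if a = f s then 1 else 0
  nonneg := by intro h s a; split <;> norm_num
  sum_one := by intro h s; simp
  supp := by
    intro h s a ha
    rw [if_neg]
    intro hEq
    exact ha (hEq ▸ hf s)

/-- The simultaneous Doeblin condition: `E_x^f[T] ≤ M` for every state `x` and every
stationary policy `f`, where `T` is the first positive arrival time to `z`. -/
def Doeblin (z : S) (M : ℝ) : Prop :=
  0 < M ∧ ∀ (x : S) (f : S → A) (hf : ∀ s, f s ∈ Adm s),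
    ExpT Adm p (stationary Adm f hf) x z ≤ ENNReal.ofReal M

/-- `B_g(x) = {a ∈ A(x) : g(x) = max{g(y) : p_{xy}(a) > 0}}`. -/
def Bg (g : S → ℝ) (x : S) : Set A :=
  {a | a ∈ Adm x ∧ g x = sSup (g '' {y | 0 < p x a y})}

/-- The family `𝒢` of functions characterizing `J*(λ,·)`. -/
def Gclass : Set (S → ℝ) :=
  {g | (∀ x, g x = sInf ((fun a => sSup (g '' {y | 0 < p x a y})) '' (Adm x : Set A))) ∧
    ∃ h : S → ℝ, ∀ x,
      sInf ((fun a => Real.exp (lam * C x a) * ∑ y, p x a y * Real.exp (lam * h y)) ''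
        Bg Adm p g x) ≤ Real.exp (lam * g x + lam * h x)}

/-- The class `𝒫*` of policies which always select actions in `B*(X_t)`. -/
def Pstar : Set (Policy S A Adm) :=
  {π | ∀ (x : S) (t : ℕ),
    cylProb Adm p π x (t + 1)
      (fun v => (v (Fin.last t)).1 ∈
        Bg Adm p (Jopt Adm p C lam) (stateAt x (List.ofFn v) t)) = 1}

/-- The deviation function
`h(x) = inf_{π ∈ 𝒫*} (1/λ) log E_x^π[exp(λα Σ_{t<T}(C(X_t,A_t) − J*(λ,X_t)))]`. -/
noncomputable def hdev (z : S) (α : ℝ) (x : S) : EReal :=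
  ⨅ π ∈ Pstar Adm p C lam, ((lam⁻¹ : ℝ) : EReal) *
    ENNReal.log (EhitExp Adm p π x z
      (fun s a => lam * α * (C s a - Jopt Adm p C lam s)))

/-- `ψ(ε) = (1/λ) inf_{δ∈𝒫*} log E_z^δ[exp(λ Σ_{t<T}(C(X_t,A_t) − γ₀ − 2ε))]`. -/
noncomputable def psi (z : S) (ε : ℝ) : EReal :=
  ((lam⁻¹ : ℝ) : EReal) * ⨅ π ∈ Pstar Adm p C lam,
    ENNReal.log (EhitExp Adm p π z z
      (fun s a => lam * (C s a - Jopt Adm p C lam z - 2 * ε)))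

/-- `ξ₀ = −(1−α) log β / (λα)`. -/
noncomputable def xi0 (α β : ℝ) : ℝ := -((1 - α) * Real.log β) / (lam * α)

/-- `ξ₁`: 1 if `J*(λ,·)` is constant, otherwise the minimum gap between distinct
values of `J*(λ,·)`. -/
noncomputable def xi1 : ℝ :=
  if ∀ u v : S, Jopt Adm p C lam u = Jopt Adm p C lam v then 1
  else sInf {d | ∃ u v : S, Jopt Adm p C lam u < Jopt Adm p C lam v ∧
    d = Jopt Adm p C lam v - Jopt Adm p C lam u}

/-- `ξ = min{ξ₀, ξ₁}`. -/
noncomputable def xi (α β : ℝ) : ℝ := min (xi0 lam α β) (xi1 Adm p C lam)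

/-- The shifted policy obtained by prefixing the fixed history `pre`. -/
def shiftPolicy (π : Policy S A Adm) (pre : List (S × A)) : Policy S A Adm where
  toFun := fun h s a => π.toFun (pre ++ h) s a
  nonneg := fun h s a => π.nonneg _ s a
  sum_one := fun h s => π.sum_one _ s
  supp := fun h s a ha => π.supp _ s a ha

/-- The history (list of (state, action) pairs) along the trajectory `l` started at `x`. -/
def histOf : S → List (A × S) → List (S × A)
  | _, [] => []
  | x, (a, y) :: rest => (x, a) :: histOf y rest


-- ### auxiliary lemmas
section Aux
variable {Adm p C lam} (π : Policy S A Adm)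

lemma pathProbAux_nonneg
    (hp : ∀ (x : S), ∀ a ∈ Adm x, (∀ y, 0 ≤ p x a y) ∧ (∑ y, p x a y) = 1) :
    ∀ (l : List (A × S)) (hist : List (S × A)) (x : S),
      0 ≤ pathProbAux Adm p π hist x l := by
  intro l
  induction l with
  | nil => intro hist x; simp [pathProbAux]
  | cons q rest ih =>
    intro hist x
    obtain ⟨a, y⟩ := q
    by_cases ha : a ∈ Adm x
    · exact mul_nonneg (mul_nonneg (π.nonneg _ _ _) ((hp x a ha).1 y)) (ih _ _)
    · simp [pathProbAux, π.supp _ _ _ ha]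

lemma pathProb_nonneg
    (hp : ∀ (x : S), ∀ a ∈ Adm x, (∀ y, 0 ≤ p x a y) ∧ (∑ y, p x a y) = 1) (x : S)
    (l : List (A × S)) : 0 ≤ pathProb Adm p π x l :=
  pathProbAux_nonneg π hp l [] x

lemma sum_pathProbAux
    (hp : ∀ (x : S), ∀ a ∈ Adm x, (∀ y, 0 ≤ p x a y) ∧ (∑ y, p x a y) = 1) :
    ∀ (n : ℕ) (hist : List (S × A)) (x : S),
      ∑ v : Fin n → A × S, pathProbAux Adm p π hist x (List.ofFn v) = 1 := by
  intro n
  induction n with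
  | zero => intro hist x; simp [pathProbAux]
  | succ n ih =>
    intro hist x
    rw [← Equiv.sum_comp (Fin.consEquiv (fun _ : Fin (n + 1) => A × S))]
    rw [Fintype.sum_prod_type]
    have hterm : ∀ (q : A × S) (w : Fin n → A × S),
        pathProbAux Adm p π hist x
            (List.ofFn ((Fin.consEquiv (fun _ : Fin (n + 1) => A × S)) (q, w)))
          = π.toFun hist x q.1 * p x q.1 q.2 *
              pathProbAux Adm p π (hist ++ [(x, q.1)]) q.2 (List.ofFn w) := by
      intro q w
      obtain ⟨a, y⟩ := q
      simp [Fin.consEquiv, List.ofFn_succ, pathProbAux]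
    calc (∑ q : A × S, ∑ w : Fin n → A × S, pathProbAux Adm p π hist x
            (List.ofFn ((Fin.consEquiv (fun _ : Fin (n + 1) => A × S)) (q, w))))
        = ∑ q : A × S, π.toFun hist x q.1 * p x q.1 q.2 := by
          refine Finset.sum_congr rfl fun q _ => ?_
          rw [Finset.sum_congr rfl fun w _ => hterm q w, ← Finset.mul_sum,
            Finset.sum_congr rfl fun w _ => rfl]
          rw [ih _ _, mul_one]
      _ = ∑ a : A, ∑ y : S, π.toFun hist x a * p x a y := by
          rw [Fintype.sum_prod_type]
      _ = ∑ a : A, π.toFun hist x a := by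
          refine Finset.sum_congr rfl fun a _ => ?_
          by_cases ha : a ∈ Adm x
          · rw [← Finset.mul_sum, (hp x a ha).2, mul_one]
          · simp [π.supp _ _ _ ha]
      _ = 1 := π.sum_one _ _

lemma sum_pathProb
    (hp : ∀ (x : S), ∀ a ∈ Adm x, (∀ y, 0 ≤ p x a y) ∧ (∑ y, p x a y) = 1) (n : ℕ) (x : S) :
    ∑ v : Fin n → A × S, pathProb Adm p π x (List.ofFn v) = 1 :=
  sum_pathProbAux π hp n [] x

lemma lastState_cons (x : S) (a : A) (y : S) (l : List (A × S)) :
    lastState x ((a, y) :: l) = lastState y l := rfl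

lemma pathProbAux_shift (pre : List (S × A)) :
    ∀ (l : List (A × S)) (h : List (S × A)) (x : S),
      pathProbAux Adm p π (pre ++ h) x l
        = pathProbAux Adm p (shiftPolicy Adm π pre) h x l := by
  intro l
  induction l with
  | nil => intro h x; rfl
  | cons q rest ih =>
    intro h x
    obtain ⟨a, y⟩ := q
    show π.toFun (pre ++ h) x a * p x a y *
        pathProbAux Adm p π ((pre ++ h) ++ [(x, a)]) y rest
      = (shiftPolicy Adm π pre).toFun h x a * p x a y *
        pathProbAux Adm p (shiftPolicy Adm π pre) (h ++ [(x, a)]) y rest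
    rw [List.append_assoc, ih (h ++ [(x, a)]) y]
    rfl

lemma pathProbAux_append :
    ∀ (l₁ l₂ : List (A × S)) (hist : List (S × A)) (x : S),
      pathProbAux Adm p π hist x (l₁ ++ l₂)
        = pathProbAux Adm p π hist x l₁ *
            pathProbAux Adm p π (hist ++ histOf x l₁) (lastState x l₁) l₂ := by
  intro l₁
  induction l₁ with
  | nil => intro l₂ hist x; simp [pathProbAux, histOf, lastState]
  | cons q rest ih =>
    intro l₂ hist x
    obtain ⟨a, y⟩ := q
    show π.toFun hist x a * p x a y *
        pathProbAux Adm p π (hist ++ [(x, a)]) y (rest ++ l₂) = _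
    rw [ih l₂ (hist ++ [(x, a)]) y]
    show _ = π.toFun hist x a * p x a y *
        pathProbAux Adm p π (hist ++ [(x, a)]) y rest *
          pathProbAux Adm p π (hist ++ ((x, a) :: histOf y rest)) (lastState y rest) l₂
    rw [List.append_assoc]
    ring_nf
    rfl

lemma pathProb_append (l₁ l₂ : List (A × S)) (x : S) :
    pathProb Adm p π x (l₁ ++ l₂)
      = pathProb Adm p π x l₁ *
          pathProb Adm p (shiftPolicy Adm π (histOf x l₁)) (lastState x l₁) l₂ := by
  unfold pathProb
  rw [pathProbAux_append π l₁ l₂ [] x]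
  congr 1
  rw [List.nil_append, ← List.append_nil (histOf x l₁),
    pathProbAux_shift π (histOf x l₁) l₂ [] (lastState x l₁)]
  simp

lemma costSum_append (w : S → A → ℝ) :
    ∀ (l₁ l₂ : List (A × S)) (x : S),
      costSum w x (l₁ ++ l₂) = costSum w x l₁ + costSum w (lastState x l₁) l₂ := by
  intro l₁
  induction l₁ with
  | nil => intro l₂ x; simp [costSum, lastState]
  | cons q rest ih =>
    intro l₂ x
    obtain ⟨a, y⟩ := q
    show w x a + costSum w y (rest ++ l₂) = _
    rw [ih l₂ y]
    show _ = w x a + costSum w y rest + costSum w (lastState y rest) l₂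
    ring

lemma costSum_bounds {Cm CM : ℝ} (hCm : ∀ s a, Cm ≤ C s a) (hCM : ∀ s a, C s a ≤ CM) :
    ∀ (l : List (A × S)) (x : S),
      (l.length : ℝ) * Cm ≤ costSum C x l ∧ costSum C x l ≤ (l.length : ℝ) * CM := by
  intro l
  induction l with
  | nil => intro x; simp [costSum]
  | cons q rest ih =>
    intro x
    obtain ⟨a, y⟩ := q
    have h1 := (ih y).1
    have h2 := (ih y).2
    have h3 := hCm x a
    have h4 := hCM x a
    constructor
    · show ((rest.length + 1 : ℕ) : ℝ) * Cm ≤ C x a + costSum C y rest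
      push_cast; linarith
    · show C x a + costSum C y rest ≤ ((rest.length + 1 : ℕ) : ℝ) * CM
      push_cast; linarith

lemma expSum_bounds
    (hp : ∀ (x : S), ∀ a ∈ Adm x, (∀ y, 0 ≤ p x a y) ∧ (∑ y, p x a y) = 1)
    (hlam : 0 ≤ lam) {Cm CM : ℝ} (hCm : ∀ s a, Cm ≤ C s a) (hCM : ∀ s a, C s a ≤ CM)
    (x : S) (n : ℕ) :
    Real.exp (lam * (n * Cm)) ≤
        (∑ v : Fin n → A × S,
          pathProb Adm p π x (List.ofFn v) * Real.exp (lam * costSum C x (List.ofFn v)))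
      ∧ (∑ v : Fin n → A × S,
          pathProb Adm p π x (List.ofFn v) * Real.exp (lam * costSum C x (List.ofFn v)))
        ≤ Real.exp (lam * (n * CM)) := by
  constructor
  · calc Real.exp (lam * (n * Cm))
        = ∑ v : Fin n → A × S, pathProb Adm p π x (List.ofFn v) *
            Real.exp (lam * (n * Cm)) := by
          rw [← Finset.sum_mul, sum_pathProb π hp n x, one_mul]
      _ ≤ _ := by
          refine Finset.sum_le_sum fun v _ => ?_
          refine mul_le_mul_of_nonneg_left ?_ (pathProb_nonneg π hp x _)
          refine Real.exp_le_exp.2 (mul_le_mul_of_nonneg_left ?_ hlam)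
          have := (costSum_bounds (C := C) hCm hCM (List.ofFn v) x).1
          simpa [List.length_ofFn] using this
  · calc (∑ v : Fin n → A × S, pathProb Adm p π x (List.ofFn v) *
            Real.exp (lam * costSum C x (List.ofFn v)))
        ≤ ∑ v : Fin n → A × S, pathProb Adm p π x (List.ofFn v) *
            Real.exp (lam * (n * CM)) := by
          refine Finset.sum_le_sum fun v _ => ?_
          refine mul_le_mul_of_nonneg_left ?_ (pathProb_nonneg π hp x _)
          refine Real.exp_le_exp.2 (mul_le_mul_of_nonneg_left ?_ hlam)
          have := (costSum_bounds (C := C) hCm hCM (List.ofFn v) x).2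
          simpa [List.length_ofFn] using this
      _ = Real.exp (lam * (n * CM)) := by
          rw [← Finset.sum_mul, sum_pathProb π hp n x, one_mul]

lemma Jn_bounds
    (hp : ∀ (x : S), ∀ a ∈ Adm x, (∀ y, 0 ≤ p x a y) ∧ (∑ y, p x a y) = 1)
    (hlam : 0 < lam) {Cm CM : ℝ} (hCm : ∀ s a, Cm ≤ C s a) (hCM : ∀ s a, C s a ≤ CM)
    (x : S) (n : ℕ) :
    (n : ℝ) * Cm ≤ Jn Adm p C lam π x n ∧ Jn Adm p C lam π x n ≤ (n : ℝ) * CM := by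
  obtain ⟨h1, h2⟩ := expSum_bounds π hp hlam.le hCm hCM x n
  have hpos : (0 : ℝ) <
      ∑ v : Fin n → A × S,
        pathProb Adm p π x (List.ofFn v) * Real.exp (lam * costSum C x (List.ofFn v)) :=
    lt_of_lt_of_le (Real.exp_pos _) h1
  have hlog1 : lam * ((n : ℝ) * Cm) ≤ Real.log (∑ v : Fin n → A × S,
      pathProb Adm p π x (List.ofFn v) * Real.exp (lam * costSum C x (List.ofFn v))) := by
    have := Real.log_le_log (Real.exp_pos _) h1
    rwa [Real.log_exp] at this
  have hlog2 : Real.log (∑ v : Fin n → A × S,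
      pathProb Adm p π x (List.ofFn v) * Real.exp (lam * costSum C x (List.ofFn v)))
        ≤ lam * ((n : ℝ) * CM) := by
    have := Real.log_le_log hpos h2
    rwa [Real.log_exp] at this
  have hinv : (0 : ℝ) < 1 / lam := by positivity
  constructor
  · have := mul_le_mul_of_nonneg_left hlog1 hinv.le
    calc (n : ℝ) * Cm = (1 / lam) * (lam * ((n : ℝ) * Cm)) := by
          field_simp
      _ ≤ Jn Adm p C lam π x n := this
  · have := mul_le_mul_of_nonneg_left hlog2 hinv.le
    calc Jn Adm p C lam π x n ≤ (1 / lam) * (lam * ((n : ℝ) * CM)) := this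
      _ = (n : ℝ) * CM := by field_simp

lemma Jn_div_bounds
    (hp : ∀ (x : S), ∀ a ∈ Adm x, (∀ y, 0 ≤ p x a y) ∧ (∑ y, p x a y) = 1)
    (hlam : 0 < lam) {Cm CM : ℝ} (hCm : ∀ s a, Cm ≤ C s a) (hCM : ∀ s a, C s a ≤ CM)
    (x : S) (n : ℕ) :
    min Cm 0 ≤ Jn Adm p C lam π x n / n ∧ Jn Adm p C lam π x n / n ≤ max CM 0 := by
  rcases Nat.eq_zero_or_pos n with hn | hn
  · subst hn
    simp
  · have hn' : (0 : ℝ) < n := by exact_mod_cast hn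
    obtain ⟨h1, h2⟩ := Jn_bounds π hp hlam hCm hCM x n
    constructor
    · refine le_trans (min_le_left _ _) ?_
      rw [le_div_iff₀ hn']
      linarith [h1]
    · refine le_trans ?_ (le_max_left _ _)
      rw [div_le_iff₀ hn']
      linarith [h2]

lemma Javg_bounds
    (hp : ∀ (x : S), ∀ a ∈ Adm x, (∀ y, 0 ≤ p x a y) ∧ (∑ y, p x a y) = 1)
    (hlam : 0 < lam) {Cm CM : ℝ} (hCm : ∀ s a, Cm ≤ C s a) (hCM : ∀ s a, C s a ≤ CM)
    (x : S) :
    min Cm 0 ≤ Javg Adm p C lam π x ∧ Javg Adm p C lam π x ≤ max CM 0 := by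
  have hbdd : Filter.IsBoundedUnder (· ≤ ·) Filter.atTop
      (fun n : ℕ => Jn Adm p C lam π x n / n) :=
    Filter.isBoundedUnder_of ⟨max CM 0, fun n => (Jn_div_bounds π hp hlam hCm hCM x n).2⟩
  constructor
  · exact Filter.le_limsup_of_frequently_le
      (Filter.Frequently.of_forall fun n => (Jn_div_bounds π hp hlam hCm hCM x n).1) hbdd
  · have hcob : Filter.IsCoboundedUnder (· ≤ ·) Filter.atTop
        (fun n : ℕ => Jn Adm p C lam π x n / n) :=
      Filter.IsBoundedUnder.isCoboundedUnder_le
        (Filter.isBoundedUnder_of ⟨min Cm 0,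
          fun n => (Jn_div_bounds π hp hlam hCm hCM x n).1⟩)
    exact Filter.limsup_le_of_le hcob
      (Filter.Eventually.of_forall fun n => (Jn_div_bounds π hp hlam hCm hCM x n).2)

lemma Jn_append_le
    (hp : ∀ (x : S), ∀ a ∈ Adm x, (∀ y, 0 ≤ p x a y) ∧ (∑ y, p x a y) = 1)
    (hlam : 0 < lam) {Cm CM : ℝ} (hCm : ∀ s a, Cm ≤ C s a) (hCM : ∀ s a, C s a ≤ CM)
    (x : S) {r : ℕ} (v0 : Fin r → A × S)
    (hpos : 0 < pathProb Adm p π x (List.ofFn v0)) (m : ℕ) :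
    (1 / lam) * Real.log (pathProb Adm p π x (List.ofFn v0) *
        Real.exp (lam * costSum C x (List.ofFn v0)))
      + Jn Adm p C lam (shiftPolicy Adm π (histOf x (List.ofFn v0)))
          (lastState x (List.ofFn v0)) m
      ≤ Jn Adm p C lam π x (r + m) := by
  set P := List.ofFn v0 with hP
  set y := lastState x P with hy
  set π' := shiftPolicy Adm π (histOf x P) with hπ'
  set c := pathProb Adm p π x P * Real.exp (lam * costSum C x P) with hc
  have hcpos : 0 < c := mul_pos hpos (Real.exp_pos _)
  set E' := ∑ w : Fin m → A × S,
      pathProb Adm p π' y (List.ofFn w) * Real.exp (lam * costSum C y (List.ofFn w)) with hE'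
  set E := ∑ v : Fin (r + m) → A × S,
      pathProb Adm p π x (List.ofFn v) * Real.exp (lam * costSum C x (List.ofFn v)) with hE
  have hE'pos : 0 < E' :=
    lt_of_lt_of_le (Real.exp_pos _) (expSum_bounds π' hp hlam.le hCm hCM y m).1
  have hterm : ∀ w : Fin m → A × S,
      pathProb Adm p π x (List.ofFn (Fin.append v0 w)) *
          Real.exp (lam * costSum C x (List.ofFn (Fin.append v0 w)))
        = c * (pathProb Adm p π' y (List.ofFn w) *
            Real.exp (lam * costSum C y (List.ofFn w))) := by
    intro w
    rw [List.ofFn_fin_append, pathProb_append π P (List.ofFn w) x,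
      costSum_append C P (List.ofFn w) x, mul_add, Real.exp_add, ← hy, ← hπ', hc]
    ring
  have hinj : Function.Injective (fun w : Fin m → A × S => Fin.append v0 w) := by
    intro w w' h
    funext i
    have := congrFun h (Fin.natAdd r i)
    simpa [Fin.append_right] using this
  have hkey : c * E' ≤ E := by
    have himg : ∑ v ∈ Finset.univ.image (fun w : Fin m → A × S => Fin.append v0 w),
        pathProb Adm p π x (List.ofFn v) * Real.exp (lam * costSum C x (List.ofFn v))
          = c * E' := by
      rw [Finset.sum_image (fun a _ b _ h => hinj h)]
      rw [hE', Finset.mul_sum]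
      exact Finset.sum_congr rfl fun w _ => hterm w
    rw [← himg, hE]
    refine Finset.sum_le_sum_of_subset_of_nonneg (Finset.subset_univ _) fun v _ _ => ?_
    exact mul_nonneg (pathProb_nonneg π hp x _) (Real.exp_pos _).le
  have hEpos : 0 < E := lt_of_lt_of_le (mul_pos hcpos hE'pos) hkey
  have hlog : Real.log c + Real.log E' ≤ Real.log E := by
    rw [← Real.log_mul hcpos.ne' hE'pos.ne']
    exact Real.log_le_log (mul_pos hcpos hE'pos) hkey
  have hinv : (0 : ℝ) ≤ 1 / lam := by positivity
  have := mul_le_mul_of_nonneg_left hlog hinv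
  show (1 / lam) * Real.log c + (1 / lam) * Real.log E' ≤ (1 / lam) * Real.log E
  linarith [this, mul_add (1 / lam) (Real.log c) (Real.log E')]

lemma Javg_shift_le
    (hp : ∀ (x : S), ∀ a ∈ Adm x, (∀ y, 0 ≤ p x a y) ∧ (∑ y, p x a y) = 1)
    (hlam : 0 < lam) {Cm CM : ℝ} (hCm : ∀ s a, Cm ≤ C s a) (hCM : ∀ s a, C s a ≤ CM)
    (x : S) {r : ℕ} (v0 : Fin r → A × S)
    (hpos : 0 < pathProb Adm p π x (List.ofFn v0)) :
    Javg Adm p C lam (shiftPolicy Adm π (histOf x (List.ofFn v0)))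
        (lastState x (List.ofFn v0))
      ≤ Javg Adm p C lam π x := by
  set P := List.ofFn v0 with hP
  set y := lastState x P with hy
  set π' := shiftPolicy Adm π (histOf x P) with hπ'
  set K := (1 / lam) * Real.log (pathProb Adm p π x P * Real.exp (lam * costSum C x P))
    with hK
  set L := min Cm 0 with hL
  set U := max CM 0 with hU
  set B := |K| + (r : ℝ) * (|L| + |U|) with hB
  have hBnn : 0 ≤ B := by positivity
  refine le_of_forall_pos_le_add fun δ hδ => ?_
  obtain ⟨N, hN⟩ := exists_nat_gt (B / δ)
  set m₀ := N + 1 with hm₀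
  have hm₀pos : (0 : ℝ) < m₀ := by positivity
  have hδm₀ : B / m₀ ≤ δ := by
    rw [div_le_iff₀ hm₀pos]
    have : B / δ < m₀ := lt_of_lt_of_le hN (by rw [hm₀]; push_cast; linarith)
    rw [div_lt_iff₀ hδ] at this
    linarith
  have hev : ∀ m ≥ m₀, Jn Adm p C lam π' y m / m ≤
      Jn Adm p C lam π x (m + r) / ((m + r : ℕ) : ℝ) + δ := by
    intro m hm
    have hmpos : (0 : ℝ) < m := lt_of_lt_of_le hm₀pos (by exact_mod_cast hm)
    have hmr : (0 : ℝ) < (m : ℝ) + r := by positivity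
    have hkey := Jn_append_le π hp hlam hCm hCM x v0 hpos m
    rw [Nat.add_comm r m] at hkey
    set a := Jn Adm p C lam π' y m with ha
    have hdivb := Jn_div_bounds π' hp hlam hCm hCM y m
    have haL : (m : ℝ) * L ≤ a := by
      have := hdivb.1
      rw [le_div_iff₀ hmpos] at this
      linarith
    have haU : a ≤ (m : ℝ) * U := by
      have := hdivb.2
      rw [div_le_iff₀ hmpos] at this
      linarith
    have hcast : ((m + r : ℕ) : ℝ) = (m : ℝ) + r := by push_cast; ring
    have hBm : B / m ≤ δ := by
      refine le_trans ?_ hδm₀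
      apply div_le_div_of_nonneg_left hBnn hm₀pos
      exact_mod_cast hm
    have habs : a ≤ (m : ℝ) * (|L| + |U|) := by
      have : U ≤ |U| := le_abs_self U
      nlinarith [abs_nonneg L]
    have hKabs : -|K| ≤ K := neg_abs_le K
    have hmain : a / m ≤ (K + a) / ((m : ℝ) + r) + δ := by
      rw [div_add' _ _ _ hmr.ne', div_le_div_iff₀ hmpos hmr]
      have hδm : B ≤ δ * m := by
        rw [div_le_iff₀ hmpos] at hBm; linarith
      nlinarith [hmpos.le, hmr.le, hδ.le, mul_nonneg hδ.le (mul_nonneg hmpos.le hmpos.le)]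
    calc a / m ≤ (K + a) / ((m : ℝ) + r) + δ := hmain
      _ ≤ Jn Adm p C lam π x (m + r) / ((m + r : ℕ) : ℝ) + δ := by
          rw [hcast]
          have : (K + a) / ((m : ℝ) + r) ≤ Jn Adm p C lam π x (m + r) / ((m : ℝ) + r) :=
            (div_le_div_iff_of_pos_right hmr).2 hkey
          linarith
  have hbdd : Filter.IsBoundedUnder (· ≤ ·) Filter.atTop
      (fun m : ℕ => Jn Adm p C lam π x (m + r) / ((m + r : ℕ) : ℝ) + δ) :=
    Filter.isBoundedUnder_of ⟨U + δ, fun m => by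
      have := (Jn_div_bounds π hp hlam hCm hCM x (m + r)).2
      linarith⟩
  have hcob : Filter.IsCoboundedUnder (· ≤ ·) Filter.atTop
      (fun m : ℕ => Jn Adm p C lam π' y m / m) :=
    Filter.IsBoundedUnder.isCoboundedUnder_le
      (Filter.isBoundedUnder_of ⟨L, fun m => (Jn_div_bounds π' hp hlam hCm hCM y m).1⟩)
  have h1 : Javg Adm p C lam π' y ≤
      Filter.limsup (fun m : ℕ => Jn Adm p C lam π x (m + r) / ((m + r : ℕ) : ℝ) + δ)
        Filter.atTop := by
    refine Filter.limsup_le_limsup ?_ hcob hbdd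
    exact Filter.eventually_atTop.2 ⟨m₀, hev⟩
  have h2 : Filter.limsup (fun m : ℕ => Jn Adm p C lam π x (m + r) / ((m + r : ℕ) : ℝ) + δ)
      Filter.atTop = Javg Adm p C lam π x + δ := by
    rw [limsup_add_const Filter.atTop
      (fun m : ℕ => Jn Adm p C lam π x (m + r) / ((m + r : ℕ) : ℝ)) δ
      (Filter.isBoundedUnder_of ⟨U, fun m => (Jn_div_bounds π hp hlam hCm hCM x (m + r)).2⟩)
      (Filter.IsBoundedUnder.isCoboundedUnder_le
        (Filter.isBoundedUnder_of ⟨L, fun m => (Jn_div_bounds π hp hlam hCm hCM x (m + r)).1⟩))]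
    congr 1
    exact Filter.limsup_nat_add (fun n : ℕ => Jn Adm p C lam π x n / n) r
  linarith [h1, h2.le]

end Aux

/-- if `x` minimizes `J*(λ,·)` and `π` is `ε`-optimal at `x` with
`ε ∈ (0,ξ)`, then `P_x^π[J*(λ,X_r) = γ₀] = 1` for every `r`. -/
theorem stays_at_minimum
    (hA : ∀ x, (Adm x).Nonempty)
    (hp : ∀ (x : S), ∀ a ∈ Adm x, (∀ y, 0 ≤ p x a y) ∧ (∑ y, p x a y) = 1)
    (hlam : 0 < lam) (α : ℝ) (hα : α ∈ Set.Ioo (0 : ℝ) 1)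
    (z : S) (M : ℝ) (hDoe : Doeblin Adm p z M)
    (β β₀ : ℝ) (hβ : β ∈ Set.Ioo (0 : ℝ) 1) (hβ₀ : 0 < β₀)
    (hTail : ∀ (x : S) (π : Policy S A Adm) (n : ℕ),
      survProb Adm p π x z n ≤ β₀ * β ^ (n + 1))
    (x : S) (hx : Jopt Adm p C lam x = ⨅ y : S, Jopt Adm p C lam y)
    (ε : ℝ) (hε : ε ∈ Set.Ioo 0 (xi Adm p C lam α β))
    (π : Policy S A Adm) (hopt : EpsOptimalAt Adm p C lam π x ε) (r : ℕ) :
    cylProb Adm p π x r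
      (fun v => Jopt Adm p C lam (stateAt x (List.ofFn v) r) =
        ⨅ y : S, Jopt Adm p C lam y) = 1 := by
  classical
  obtain ⟨a0, ha0⟩ := hA x
  haveI : Nonempty A := ⟨a0⟩
  haveI : Nonempty S := ⟨x⟩
  haveI : Nonempty (Policy S A Adm) :=
    ⟨stationary Adm (fun s => (hA s).choose) (fun s => (hA s).choose_spec)⟩
  set Cm : ℝ := Finset.univ.inf' Finset.univ_nonempty (fun q : S × A => C q.1 q.2) with hCmdef
  set CM : ℝ := Finset.univ.sup' Finset.univ_nonempty (fun q : S × A => C q.1 q.2) with hCMdef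
  have hCm : ∀ s a, Cm ≤ C s a := fun s a =>
    Finset.inf'_le (fun q : S × A => C q.1 q.2) (Finset.mem_univ (s, a))
  have hCM : ∀ s a, C s a ≤ CM := fun s a =>
    Finset.le_sup' (fun q : S × A => C q.1 q.2) (Finset.mem_univ (s, a))
  set γ := ⨅ y : S, Jopt Adm p C lam y with hγ
  have hbddJ : ∀ y : S, BddBelow (Set.range fun π' : Policy S A Adm =>
      Javg Adm p C lam π' y) := by
    intro y
    exact ⟨min Cm 0, by
      rintro _ ⟨π'', rfl⟩
      exact (Javg_bounds π'' hp hlam hCm hCM y).1⟩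
  have hγle : ∀ y : S, γ ≤ Jopt Adm p C lam y := fun y =>
    ciInf_le (Set.finite_range _).bddBelow y
  have key : ∀ v : Fin r → A × S,
      ¬ (Jopt Adm p C lam (stateAt x (List.ofFn v) r) = γ) →
      pathProb Adm p π x (List.ofFn v) = 0 := by
    intro v hbad
    by_contra h0
    have hpos : 0 < pathProb Adm p π x (List.ofFn v) :=
      lt_of_le_of_ne (pathProb_nonneg π hp x _) (Ne.symm h0)
    have hstate : stateAt x (List.ofFn v) r = lastState x (List.ofFn v) := by
      unfold stateAt lastState
      rw [List.take_of_length_le (by simp)]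
    set y := lastState x (List.ofFn v) with hydef
    rw [hstate] at hbad
    have hne : Jopt Adm p C lam y ≠ γ := hbad
    have hgt : γ < Jopt Adm p C lam y := lt_of_le_of_ne (hγle y) (Ne.symm hne)
    -- ξ₁ ≤ Jopt y - γ
    have hxconst : ¬ (∀ u v : S, Jopt Adm p C lam u = Jopt Adm p C lam v) := by
      intro hconst
      have := hconst x y
      rw [hx] at this
      exact absurd this (ne_of_lt hgt)
    have hxi1 : xi1 Adm p C lam ≤ Jopt Adm p C lam y - γ := by
      rw [xi1, if_neg hxconst]
      have hmem : Jopt Adm p C lam y - γ ∈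
          {d | ∃ u v : S, Jopt Adm p C lam u < Jopt Adm p C lam v ∧
            d = Jopt Adm p C lam v - Jopt Adm p C lam u} := by
        refine ⟨x, y, ?_, ?_⟩ <;> rw [hx]
        exact hgt
      refine csInf_le ?_ hmem
      have hsub : {d | ∃ u v : S, Jopt Adm p C lam u < Jopt Adm p C lam v ∧
            d = Jopt Adm p C lam v - Jopt Adm p C lam u} ⊆
          Set.range (fun q : S × S => Jopt Adm p C lam q.2 - Jopt Adm p C lam q.1) := by
        rintro d ⟨u, w, _, rfl⟩
        exact ⟨(u, w), rfl⟩
      exact ((Set.finite_range _).subset hsub).bddBelow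
    -- ε < ξ₁
    have hεxi1 : ε < xi1 Adm p C lam :=
      lt_of_lt_of_le hε.2 (min_le_right _ _)
    -- chain of inequalities
    have h1 : Javg Adm p C lam π x ≤ γ + ε := by
      have := hopt
      rw [EpsOptimalAt, hx] at this
      exact this
    have h2 : Javg Adm p C lam (shiftPolicy Adm π (histOf x (List.ofFn v))) y
        ≤ Javg Adm p C lam π x :=
      Javg_shift_le π hp hlam hCm hCM x v hpos
    have h3 : Jopt Adm p C lam y ≤
        Javg Adm p C lam (shiftPolicy Adm π (histOf x (List.ofFn v))) y :=
      ciInf_le (hbddJ y) _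
    linarith
  -- conclude
  unfold cylProb
  rw [Finset.sum_congr rfl (fun v _ => ?_), sum_pathProb π hp r x]
  by_cases hE : Jopt Adm p C lam (stateAt x (List.ofFn v) r) = ⨅ y : S, Jopt Adm p C lam y
  · rw [if_pos hE]
  · rw [if_neg hE, key v hE]

end RiskSensitive
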